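/- Let v₁ = (0,0,0), v₂ = (1000,0,0), v₃ = (463,843,0), v₄ = (749,−85,237), v₅ = (−55,−97,−358), v₆ = (304,580,284), v₇ = (−409,518,−414), v₈ = (237,−206,−171), v₉ = (530,717,80), v₁₀ = (122,560,−819) in ℝ³, and define edge vectors eᵢ = v_{i+1} − vᵢ for i = 1, …, 9 and e₁₀ = v₁ − v₁₀. Then there is no w ∈ ℝ³ such that (−1)^{i+1} (w · eᵢ) > 0 for every i ∈ {1, …, 10}. -/

import Mathlib

/-- The vertices of the paper's 10-stick polygonal realization of the knot `8_12`.
Here `vert8_12 i` is the paper's vertex `v_(i+1)`. -/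
noncomputable def vert8_12 : Fin 10 → (Fin 3 → ℝ) :=
  ![![0, 0, 0], ![1000, 0, 0], ![463, 843, 0], ![749, -85, 237], ![-55, -97, -358], ![304, 580, 284], ![-409, 518, -414], ![237, -206, -171], ![530, 717, 80], ![122, 560, -819]]

/-- The edge vectors `eᵢ = v_(i+1) − vᵢ` (cyclically, so `e₁₀ = v₁ − v₁₀`);
here `edge8_12 i` is the paper's `e_(i+1)`, using wrap-around addition on `Fin 10`. -/
noncomputable def edge8_12 (i : Fin 10) : Fin 3 → ℝ :=
  vert8_12 (i + 1) - vert8_12 i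

lemma edge0 : edge8_12 0 = ![1000, 0, 0] - ![0, 0, 0] := rfl
lemma edge4 : edge8_12 4 = ![304, 580, 284] - ![-55, -97, -358] := rfl
lemma edge7 : edge8_12 7 = ![530, 717, 80] - ![237, -206, -171] := rfl
lemma edge8 : edge8_12 8 = ![122, 560, -819] - ![530, 717, 80] := rfl

/-- There is no `w ∈ ℝ³` such that `(−1)^(i+1) (w · eᵢ) > 0` for every
`i ∈ {1, …, 10}`: no projection of this polygon (the knot `8_12`) to a line has
5 local maxima. (With 0-based indexing `i : Fin 10`, the sign is `(−1)^i`.) -/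
theorem no_alternating_direction_8_12 :
    ¬ ∃ w : Fin 3 → ℝ, ∀ i : Fin 10,
        0 < (-1 : ℝ) ^ (i : ℕ) * ∑ j : Fin 3, w j * edge8_12 i j := by
  rintro ⟨w, h⟩
  have h0 := h 0
  have h4 := h 4
  have h7 := h 7
  have h8 := h 8
  rw [edge0] at h0
  rw [edge4] at h4
  rw [edge7] at h7
  rw [edge8] at h8
  norm_num [Fin.sum_univ_three, Matrix.cons_val_two, Matrix.tail_cons, Matrix.head_cons, show ((0 : Fin 10) : ℕ) = 0 from rfl,
    show ((4 : Fin 10) : ℕ) = 4 from rfl, show ((7 : Fin 10) : ℕ) = 7 from rfl,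
    show ((8 : Fin 10) : ℕ) = 8 from rfl] at h0 h4 h7 h8
  linarith
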